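/- Suppose rank(col{A − λI, I^{T}, f}) = rank(col{A − λI, I^{T}}) = m ≤ n for some T ⊆ {1,...,n} and row vector f. If Δ* ⊆ T is a minimum-cardinality set with rank(col{A − λI, I^{T\Δ*}, f}) > rank(col{A − λI, I^{T\Δ*}}), then rank(col{A − λI, I^{T\Δ*}, f}) = m and rank(col{A − λI, I^{T\Δ*}}) = m − 1, and Δ* is a minimal subset of T achieving rank(col{A − λI, I^{T\Δ*}}) = m − 1. -/

import Mathlib

/-- `I^{T}`: the identity matrix with the columns outside `T` zeroed out. -/
def idOn (n : ℕ) (T : Finset (Fin n)) : Matrix (Fin n) (Fin n) ℂ :=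
  Matrix.of fun i j => if j ∈ T ∧ i = j then (1 : ℂ) else 0

/-- `col{A - λI, I^{T}}`. -/
def stk2 (n : ℕ) (A : Matrix (Fin n) (Fin n) ℝ) (lam : ℂ) (T : Finset (Fin n)) :
    Matrix (Fin n ⊕ Fin n) (Fin n) ℂ :=
  Matrix.fromRows (A.map Complex.ofReal - lam • (1 : Matrix (Fin n) (Fin n) ℂ)) (idOn n T)

/-- `col{A - λI, I^{T}, f}` for a row vector `f`. -/
def stk3 (n : ℕ) (A : Matrix (Fin n) (Fin n) ℝ) (lam : ℂ) (f : Matrix (Fin 1) (Fin n) ℝ)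
    (T : Finset (Fin n)) : Matrix ((Fin n ⊕ Fin n) ⊕ Fin 1) (Fin n) ℂ :=
  Matrix.fromRows (stk2 n A lam T) (f.map Complex.ofReal)

open Submodule Module

section Helpers

variable {n : ℕ}

/-- span of the standard basis vectors indexed by `S`. -/
noncomputable def Espan (S : Finset (Fin n)) : Submodule ℂ (Fin n → ℂ) :=
  span ℂ ((fun j => Pi.single j (1 : ℂ)) '' (S : Set (Fin n)))

lemma idOn_row_mem {S : Finset (Fin n)} {i : Fin n} (hi : i ∈ S) :
    idOn n S i = Pi.single i 1 := by
  funext j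
  by_cases h : i = j
  · subst h; simp [idOn, hi]
  · simp [idOn, Pi.single_apply, h, Ne.symm h]

lemma idOn_row_not_mem {S : Finset (Fin n)} {i : Fin n} (hi : i ∉ S) :
    idOn n S i = 0 := by
  funext j
  simp only [idOn, Matrix.of_apply, Pi.zero_apply, ite_eq_right_iff, and_imp]
  rintro hj rfl
  exact absurd hj hi

lemma span_range_idOn (S : Finset (Fin n)) :
    span ℂ (Set.range (idOn n S)) = Espan S := by
  refine le_antisymm (span_le.mpr ?_) (span_le.mpr ?_)
  · rintro _ ⟨i, rfl⟩
    by_cases hi : i ∈ S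
    · rw [idOn_row_mem hi]
      exact subset_span ⟨i, by simpa using hi, rfl⟩
    · rw [idOn_row_not_mem hi]
      exact zero_mem _
  · rintro _ ⟨j, hj, rfl⟩
    exact subset_span ⟨j, idOn_row_mem (by simpa using hj)⟩

lemma Espan_insert (x : Fin n) (S : Finset (Fin n)) :
    Espan (insert x S) = span ℂ {Pi.single x (1 : ℂ)} ⊔ Espan S := by
  unfold Espan
  rw [Finset.coe_insert, Set.image_insert_eq, Submodule.span_insert]

lemma mem_of_finrank_le {V' : Submodule ℂ (Fin n → ℂ)} {v : Fin n → ℂ}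
    (h : finrank ℂ ↥(V' ⊔ span ℂ {v}) ≤ finrank ℂ ↥V') : v ∈ V' := by
  have he := Submodule.eq_of_le_of_finrank_le (le_sup_left : V' ≤ V' ⊔ span ℂ {v}) h
  rw [he]
  exact Submodule.mem_sup_right (subset_span rfl)

lemma sup_span_eq {V' : Submodule ℂ (Fin n → ℂ)} {v : Fin n → ℂ} (h : v ∈ V') :
    V' ⊔ span ℂ {v} = V' :=
  sup_eq_left.mpr (span_le.mpr (Set.singleton_subset_iff.mpr h))

lemma finrank_sup_span_le (V' : Submodule ℂ (Fin n → ℂ)) (v : Fin n → ℂ) :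
    finrank ℂ ↥(V' ⊔ span ℂ {v}) ≤ finrank ℂ ↥V' + 1 := by
  refine le_trans (Submodule.finrank_add_le_finrank_add_finrank _ _) ?_
  by_cases hv : v = (0 : Fin n → ℂ)
  · rw [hv, Submodule.span_zero_singleton]
    simp
  · rw [show span ℂ {v} = ℂ ∙ v from rfl, finrank_span_singleton hv]

lemma exchange_lemma {U : Submodule ℂ (Fin n → ℂ)} {u w : Fin n → ℂ}
    (h1 : w ∈ U ⊔ span ℂ {u}) (h2 : w ∉ U) : u ∈ U ⊔ span ℂ {w} := by
  have e1 : ∀ z : Fin n → ℂ, U ⊔ span ℂ {z} = span ℂ (insert z (U : Set (Fin n → ℂ))) := by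
    intro z
    rw [Submodule.span_insert, Submodule.span_eq, sup_comm]
  rw [e1] at h1 ⊢
  exact mem_span_insert_exchange h1 (by rwa [Submodule.span_eq])

lemma sdiff_erase_eq' {T Δ : Finset (Fin n)} {x : Fin n} (hx : x ∈ Δ) (hΔ : Δ ⊆ T) :
    T \ Δ.erase x = insert x (T \ Δ) := by
  ext y
  by_cases hy : y = x
  · subst hy
    simp [hΔ hx, hx]
  · simp [Finset.mem_erase, hy]

end Helpers

/-- Generalized optimality characterization (Proposition 2 of the paper): if
`rank col{A-λI, I^T, f} = rank col{A-λI, I^T} = m ≤ n` and `Δ* ⊆ T` is a set of minimum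
cardinality with `rank col{A-λI, I^{T\Δ*}, f} > rank col{A-λI, I^{T\Δ*}}`, then these
ranks equal `m` and `m - 1`, and `Δ*` is a minimal subset of `T` achieving
`rank col{A-λI, I^{T\Δ*}} = m - 1`. -/
theorem minimum_blocking_in_restricted_set (n m : ℕ) (hm : m ≤ n)
    (A : Matrix (Fin n) (Fin n) ℝ) (lam : ℂ) (f : Matrix (Fin 1) (Fin n) ℝ)
    (T : Finset (Fin n))
    (h3 : (stk3 n A lam f T).rank = m) (h2 : (stk2 n A lam T).rank = m)
    (Δstar : Finset (Fin n)) (hΔT : Δstar ⊆ T)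
    (hfeas : (stk3 n A lam f (T \ Δstar)).rank > (stk2 n A lam (T \ Δstar)).rank)
    (hmin : ∀ Δ : Finset (Fin n), Δ ⊆ T →
      (stk3 n A lam f (T \ Δ)).rank > (stk2 n A lam (T \ Δ)).rank → Δstar.card ≤ Δ.card) :
    (stk3 n A lam f (T \ Δstar)).rank = m ∧
    (stk2 n A lam (T \ Δstar)).rank = m - 1 ∧
    ∀ Δ' : Finset (Fin n), Δ' ⊂ Δstar → (stk2 n A lam (T \ Δ')).rank ≠ m - 1 := by
  classical
  set B : Matrix (Fin n) (Fin n) ℂ :=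
    A.map Complex.ofReal - lam • (1 : Matrix (Fin n) (Fin n) ℂ) with hB
  set W : Submodule ℂ (Fin n → ℂ) := span ℂ (Set.range B) with hW
  set V : Finset (Fin n) → Submodule ℂ (Fin n → ℂ) := fun S => W ⊔ Espan S with hV
  set fv : Fin n → ℂ := (f.map Complex.ofReal) 0 with hfv
  -- span of rows of stk2
  have hsp2 : ∀ S : Finset (Fin n),
      span ℂ (Set.range (stk2 n A lam S)) = V S := by
    intro S
    have : Set.range (stk2 n A lam S) = Set.range B ∪ Set.range (idOn n S) :=
      Set.Sum.elim_range _ _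
    rw [this, Submodule.span_union, span_range_idOn]
  have hr2 : ∀ S : Finset (Fin n), (stk2 n A lam S).rank = finrank ℂ ↥(V S) := by
    intro S
    rw [Matrix.rank_eq_finrank_span_row, ← hsp2 S]; rfl
  have hsp3 : ∀ S : Finset (Fin n),
      span ℂ (Set.range (stk3 n A lam f S)) = V S ⊔ span ℂ {fv} := by
    intro S
    have h1 : Set.range (stk3 n A lam f S)
        = Set.range (stk2 n A lam S) ∪ Set.range (f.map Complex.ofReal) :=
      Set.Sum.elim_range _ _
    have h2' : Set.range (f.map Complex.ofReal) = {fv} := Set.range_unique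
    rw [h1, h2', Submodule.span_union, hsp2]
  have hr3 : ∀ S : Finset (Fin n),
      (stk3 n A lam f S).rank = finrank ℂ ↥(V S ⊔ span ℂ {fv}) := by
    intro S
    rw [Matrix.rank_eq_finrank_span_row, ← hsp3 S]; rfl
  have hVmono : ∀ {S₁ S₂ : Finset (Fin n)}, S₁ ⊆ S₂ → V S₁ ≤ V S₂ := by
    intro S₁ S₂ h
    exact sup_le_sup_left (span_mono (Set.image_mono (by exact_mod_cast h))) _
  have hVins : ∀ (x : Fin n) (S : Finset (Fin n)),
      V (insert x S) = V S ⊔ span ℂ {Pi.single x (1 : ℂ)} := by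
    intro x S
    rw [hV]
    simp only
    rw [Espan_insert, sup_comm (span ℂ {Pi.single x (1:ℂ)}) (Espan S), ← sup_assoc]
  -- rewrite hypotheses
  rw [hr2] at h2
  rw [hr3] at h3
  rw [hr2, hr3] at hfeas
  have hfT : fv ∈ V T := mem_of_finrank_le (by rw [h3, h2])
  -- infeasibility of strictly smaller subsets
  have hinf : ∀ Δ : Finset (Fin n), Δ ⊂ Δstar → fv ∈ V (T \ Δ) := by
    intro Δ hΔ
    have hc := Finset.card_lt_card hΔ
    have hnot : ¬ ((stk3 n A lam f (T \ Δ)).rank > (stk2 n A lam (T \ Δ)).rank) := by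
      intro hgt
      exact absurd (hmin Δ (hΔ.subset.trans hΔT) hgt) (by omega)
    rw [hr2, hr3] at hnot
    exact mem_of_finrank_le (not_lt.mp hnot)
  have hfnot : fv ∉ V (T \ Δstar) := by
    intro hmem
    rw [sup_span_eq hmem] at hfeas
    exact lt_irrefl _ hfeas
  -- Claim A: proper subsets of Δstar keep full rank m
  have claimA : ∀ (k : ℕ) (Δ : Finset (Fin n)), Δ.card = k → Δ ⊂ Δstar →
      finrank ℂ ↥(V (T \ Δ)) = m := by
    intro k
    induction k with
    | zero =>
      intro Δ hc _
      rw [Finset.card_eq_zero.mp hc, Finset.sdiff_empty, h2]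
    | succ k ih =>
      intro Δ hc hsub
      obtain ⟨x, hx⟩ := Finset.card_pos.mp (by omega : 0 < Δ.card)
      have hΔsubT : Δ ⊆ T := hsub.subset.trans hΔT
      have hsub0 : Δ.erase x ⊂ Δstar :=
        ssubset_of_subset_of_ssubset (Finset.erase_subset _ _) hsub
    -- induction hypothesis at Δ.erase x
      have IH : finrank ℂ ↥(V (T \ Δ.erase x)) = m :=
        ih (Δ.erase x) (by rw [Finset.card_erase_of_mem hx]; omega) hsub0
      have hid : T \ Δ.erase x = insert x (T \ Δ) := sdiff_erase_eq' hx hΔsubT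
      have hVid : V (T \ Δ.erase x) = V (T \ Δ) ⊔ span ℂ {Pi.single x (1 : ℂ)} := by
        rw [hid, hVins]
      have hle : finrank ℂ ↥(V (T \ Δ)) ≤ m := by
        rw [← h2]
        exact Submodule.finrank_mono (hVmono (Finset.sdiff_subset))
      by_contra hne
      have hlt : finrank ℂ ↥(V (T \ Δ)) < m := lt_of_le_of_ne hle hne
      have hexnot : Pi.single x (1 : ℂ) ∉ V (T \ Δ) := by
        intro hmem
        rw [hVid, sup_span_eq hmem] at IH
        omega
      have hxstar : x ∈ Δstar := hsub.subset hx
      have hfa : fv ∈ V (T \ Δstar) ⊔ span ℂ {Pi.single x (1 : ℂ)} := by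
        have h := hinf (Δstar.erase x) (Finset.erase_ssubset hxstar)
        rwa [sdiff_erase_eq' hxstar hΔT, hVins] at h
      have hex : Pi.single x (1 : ℂ) ∈ V (T \ Δstar) ⊔ span ℂ {fv} :=
        exchange_lemma hfa hfnot
      have hle2 : V (T \ Δstar) ⊔ span ℂ {fv} ≤ V (T \ Δ) := by
        rw [← sup_span_eq (hinf Δ hsub)]
        exact sup_le_sup_right (hVmono (Finset.sdiff_subset_sdiff (le_refl T) hsub.subset)) _
      exact hexnot (hle2 hex)
  -- conclude
  have hΔne : Δstar.Nonempty := by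
    rcases Δstar.eq_empty_or_nonempty with h | h
    · rw [h, Finset.sdiff_empty] at hfnot
      exact absurd hfT hfnot
    · exact h
  obtain ⟨x, hx⟩ := hΔne
  have hsub' : Δstar.erase x ⊂ Δstar := Finset.erase_ssubset hx
  have hVΔ' : finrank ℂ ↥(V (T \ Δstar.erase x)) = m := claimA _ _ rfl hsub'
  have hid : T \ Δstar.erase x = insert x (T \ Δstar) := sdiff_erase_eq' hx hΔT
  have hVid : V (T \ Δstar.erase x) = V (T \ Δstar) ⊔ span ℂ {Pi.single x (1 : ℂ)} := by
    rw [hid, hVins]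
  have hge : m ≤ finrank ℂ ↥(V (T \ Δstar)) + 1 := by
    rw [← hVΔ', hVid]
    exact finrank_sup_span_le _ _
  have hf' : fv ∈ V (T \ Δstar.erase x) := hinf _ hsub'
  have hr3le : finrank ℂ ↥(V (T \ Δstar) ⊔ span ℂ {fv}) ≤ m := by
    calc finrank ℂ ↥(V (T \ Δstar) ⊔ span ℂ {fv})
        ≤ finrank ℂ ↥(V (T \ Δstar.erase x) ⊔ span ℂ {fv}) :=
          Submodule.finrank_mono (sup_le_sup_right
            (hVmono (Finset.sdiff_subset_sdiff (le_refl T) (Finset.erase_subset _ _))) _)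
      _ = finrank ℂ ↥(V (T \ Δstar.erase x)) := by rw [sup_span_eq hf']
      _ = m := hVΔ'
  refine ⟨?_, ?_, ?_⟩
  · rw [hr3]; omega
  · rw [hr2]; omega
  · intro Δ' hΔ'
    rw [hr2, claimA _ Δ' rfl hΔ']
    omega
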